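/- There is a constant C such that for all f ∈ H²(ℝ²) and λ ∈ {1,2} with the right-hand side finite: r^λ |f(x)|² ≤ C ∑_{a=0,1} (‖r^{λ-1} ∂_r Ω^a f‖²_{L²} + ‖Ω^a f‖²_{L²}) for all x ∈ ℝ², where r = |x| and Ω = x₂∂₁ - x₁∂₂. -/

import Mathlib

set_option maxHeartbeats 2000000

open MeasureTheory Set Real


noncomputable def pderiv2 (i : Fin 2) (f : EuclideanSpace ℝ (Fin 2) → ℝ)
    (x : EuclideanSpace ℝ (Fin 2)) : ℝ :=
  fderiv ℝ f x (EuclideanSpace.single i 1)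

noncomputable def rderiv2 (f : EuclideanSpace ℝ (Fin 2) → ℝ)
    (x : EuclideanSpace ℝ (Fin 2)) : ℝ :=
  fderiv ℝ f x (‖x‖⁻¹ • x)

noncomputable def rot2 (f : EuclideanSpace ℝ (Fin 2) → ℝ)
    (x : EuclideanSpace ℝ (Fin 2)) : ℝ :=
  x 1 * pderiv2 0 f x - x 0 * pderiv2 1 f x

noncomputable def mk2 (a b : ℝ) : EuclideanSpace ℝ (Fin 2) :=
  a • EuclideanSpace.single 0 (1:ℝ) + b • EuclideanSpace.single 1 (1:ℝ)

@[simp] lemma mk2_apply0 (a b : ℝ) : mk2 a b 0 = a := by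
  simp [mk2, EuclideanSpace.single_apply]

@[simp] lemma mk2_apply1 (a b : ℝ) : mk2 a b 1 = b := by
  simp [mk2, EuclideanSpace.single_apply]

lemma mk2_eq_self (v : EuclideanSpace ℝ (Fin 2)) : mk2 (v 0) (v 1) = v := by
  ext i
  fin_cases i <;> simp [mk2, EuclideanSpace.single_apply]

lemma norm_mk2 (a b : ℝ) : ‖mk2 a b‖ = Real.sqrt (a^2 + b^2) := by
  rw [EuclideanSpace.norm_eq]
  simp [Fin.sum_univ_two, sq_abs]

lemma smul_mk2 (s a b : ℝ) : s • mk2 a b = mk2 (s*a) (s*b) := by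
  ext i
  fin_cases i <;> simp [mk2, EuclideanSpace.single_apply] <;> ring

lemma fderiv_apply_eq (f : EuclideanSpace ℝ (Fin 2) → ℝ) (x v : EuclideanSpace ℝ (Fin 2))
    (hf : DifferentiableAt ℝ f x) :
    fderiv ℝ f x v = v 0 * pderiv2 0 f x + v 1 * pderiv2 1 f x := by
  conv_lhs => rw [← mk2_eq_self v]
  rw [mk2, map_add, _root_.map_smul, _root_.map_smul]
  simp [pderiv2, smul_eq_mul]

section derivs
variable {f : EuclideanSpace ℝ (Fin 2) → ℝ}

lemma hasDerivAt_ray (hf : Differentiable ℝ f) (θ : EuclideanSpace ℝ (Fin 2)) (s : ℝ) :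
    HasDerivAt (fun s => f (s • θ)) (fderiv ℝ f (s • θ) θ) s := by
  have h1 : HasDerivAt (fun s : ℝ => s • θ) θ s := by
    simpa using (hasDerivAt_id s).smul_const θ
  exact ((hf (s • θ)).hasFDerivAt).comp_hasDerivAt s h1

lemma rderiv2_smul (hθ : ‖θ‖ = 1) {s : ℝ} (hs : 0 < s) :
    rderiv2 f (s • θ) = fderiv ℝ f (s • θ) θ := by
  have : ‖s • θ‖ = s := by rw [norm_smul, hθ]; simp [abs_of_pos hs]
  rw [rderiv2, this, smul_smul, inv_mul_cancel₀ hs.ne', one_smul]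

lemma hasDerivAt_angular (hf : Differentiable ℝ f) (r t : ℝ) :
    HasDerivAt (fun t => f (mk2 (r * Real.cos t) (r * Real.sin t)))
      (-(rot2 f (mk2 (r * Real.cos t) (r * Real.sin t)))) t := by
  set x := mk2 (r * Real.cos t) (r * Real.sin t) with hx
  have h1 : HasDerivAt (fun t => mk2 (r * Real.cos t) (r * Real.sin t))
      (mk2 (r * (-Real.sin t)) (r * Real.cos t)) t := by
    have hc : HasDerivAt (fun t : ℝ => r * Real.cos t) (r * (-Real.sin t)) t :=
      ((Real.hasDerivAt_cos t).const_mul r)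
    have hs : HasDerivAt (fun t : ℝ => r * Real.sin t) (r * Real.cos t) t :=
      ((Real.hasDerivAt_sin t).const_mul r)
    have h := (hc.smul_const (EuclideanSpace.single (0 : Fin 2) (1:ℝ))).add
      (hs.smul_const (EuclideanSpace.single (1 : Fin 2) (1:ℝ)))
    simp only [mk2]
    exact h
  have h2 := ((hf x).hasFDerivAt).comp_hasDerivAt t h1
  have h3 : fderiv ℝ f x (mk2 (r * (-Real.sin t)) (r * Real.cos t)) = -(rot2 f x) := by
    rw [fderiv_apply_eq f x _ (hf x)]
    simp only [mk2_apply0, mk2_apply1, rot2, hx]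
    ring
  rw [← h3]
  exact h2

lemma contDiff_rot2 (hf : ContDiff ℝ 2 f) : ContDiff ℝ 1 (rot2 f) := by
  have hd : ContDiff ℝ 1 (fderiv ℝ f) := hf.fderiv_right (by norm_num)
  have hp : ∀ i : Fin 2, ContDiff ℝ 1 (fun x => pderiv2 i f x) := fun i =>
    hd.clm_apply contDiff_const
  have hco : ∀ i : Fin 2, ContDiff ℝ 1 (fun x : EuclideanSpace ℝ (Fin 2) => x i) := by
    intro i
    exact (EuclideanSpace.proj (𝕜 := ℝ) i).contDiff
  exact ((hco 1).mul (hp 0)).sub ((hco 0).mul (hp 1))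

end derivs


lemma intervalCS {c d : ℝ} (hc : 0 < c) (hcd : c ≤ d) {h : ℝ → ℝ} (hh : Continuous h) :
    (∫ σ in c..d, |h σ|) ^ 2 ≤ (∫ σ in c..d, σ * h σ ^ 2) * ∫ σ in c..d, σ⁻¹ := by
  rcases eq_or_lt_of_le hcd with rfl | hlt
  · simp
  set S := ∫ σ in c..d, |h σ| with hS
  set P := ∫ σ in c..d, σ * h σ ^ 2 with hP
  set Q := ∫ σ in c..d, σ⁻¹ with hQ
  have hinvInt : IntervalIntegrable (fun σ : ℝ => σ⁻¹) volume c d := by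
    apply ContinuousOn.intervalIntegrable
    apply ContinuousOn.inv₀ continuousOn_id
    intro σ hσ
    rw [uIcc_of_le hcd] at hσ
    exact (lt_of_lt_of_le hc hσ.1).ne'
  have hQpos : 0 < Q := by
    have h1 : ∀ σ ∈ Icc c d, d⁻¹ ≤ σ⁻¹ := by
      intro σ hσ
      exact inv_anti₀ (lt_of_lt_of_le hc hσ.1) hσ.2
    have hd : 0 < d := lt_of_lt_of_le hc hcd
    calc 0 < d⁻¹ * (d - c) := mul_pos (inv_pos.2 hd) (sub_pos.2 hlt)
      _ = ∫ _ in c..d, d⁻¹ := by simp [mul_comm]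
      _ ≤ Q := by
          apply intervalIntegral.integral_mono_on hcd (by simp) hinvInt h1
  set lam := S / Q with hlam
  have key : 0 ≤ P - 2 * lam * S + lam ^ 2 * Q := by
    have hint : ∀ σ ∈ Icc c d,
        σ * h σ ^ 2 - 2 * lam * |h σ| + lam ^ 2 * σ⁻¹
          = (σ * |h σ| - lam) ^ 2 * σ⁻¹ := by
      intro σ hσ
      have hσ0 : σ ≠ 0 := (lt_of_lt_of_le hc hσ.1).ne'
      have habs : |h σ| ^ 2 = h σ ^ 2 := sq_abs _
      field_simp
      linear_combination (-(σ^2)) * habs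
    have h2 : 0 ≤ ∫ σ in c..d, (σ * h σ ^ 2 - 2 * lam * |h σ| + lam ^ 2 * σ⁻¹) := by
      apply intervalIntegral.integral_nonneg hcd
      intro σ hσ
      rw [hint σ hσ]
      have : 0 < σ := lt_of_lt_of_le hc hσ.1
      positivity
    have hPint : IntervalIntegrable (fun σ => σ * h σ ^ 2) volume c d :=
      (continuous_id.mul (hh.pow 2)).intervalIntegrable _ _
    have hSint : IntervalIntegrable (fun σ => |h σ|) volume c d :=
      (hh.abs).intervalIntegrable _ _
    rw [intervalIntegral.integral_add (hPint.sub (hSint.const_mul _))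
        (hinvInt.const_mul _), intervalIntegral.integral_sub hPint (hSint.const_mul _),
      intervalIntegral.integral_const_mul, intervalIntegral.integral_const_mul] at h2
    linarith [h2]
  have : P - S ^ 2 / Q ≥ 0 := by
    have : lam ^ 2 * Q = S ^ 2 / Q := by
      rw [hlam]; field_simp
    have h2 : 2 * lam * S = 2 * (S ^ 2 / Q) := by
      rw [hlam]; field_simp
    rw [this, h2] at key
    have := hQpos
    nlinarith
  calc S ^ 2 = S ^ 2 / Q * Q := by field_simp
    _ ≤ P * Q := by nlinarith [hQpos]

lemma exists_small {g : ℝ → ℝ} (hg : Continuous g) {a b : ℝ} (ha : 0 ≤ a) (hab : a < b) :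
    ∃ s ∈ Icc a b, (b ^ 2 - a ^ 2) / 2 * g s ^ 2 ≤ ∫ σ in a..b, σ * g σ ^ 2 := by
  obtain ⟨s, hs, hmin⟩ := isCompact_Icc.exists_isMinOn (nonempty_Icc.2 hab.le)
    ((hg.pow 2).continuousOn (s := Icc a b))
  refine ⟨s, hs, ?_⟩
  calc (b ^ 2 - a ^ 2) / 2 * g s ^ 2 = ∫ σ in a..b, σ * g s ^ 2 := by
        rw [intervalIntegral.integral_mul_const, integral_id]
    _ ≤ ∫ σ in a..b, σ * g σ ^ 2 := by
        apply intervalIntegral.integral_mono_on hab.le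
          ((continuous_id.mul continuous_const).intervalIntegrable _ _)
          ((continuous_id.mul (hg.pow 2)).intervalIntegrable _ _)
        intro σ hσ
        have h1 : g s ^ 2 ≤ g σ ^ 2 := hmin hσ
        have h2 : 0 ≤ σ := le_trans ha hσ.1
        exact mul_le_mul_of_nonneg_left h1 h2

lemma ftc_weight (l : ℕ) {g g' : ℝ → ℝ} (hg : ∀ s, HasDerivAt g (g' s) s)
    (hg' : Continuous g') {a b : ℝ} (hab : a ≤ b) :
    b ^ l * g b ^ 2 - a ^ l * g a ^ 2
      = ∫ σ in a..b, ((l : ℝ) * σ ^ (l - 1) * g σ ^ 2 + σ ^ l * (2 * g σ * g' σ)) := by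
  have hgc : Continuous g := by
    rw [continuous_iff_continuousAt]; exact fun s => (hg s).continuousAt
  symm
  apply intervalIntegral.integral_eq_sub_of_hasDerivAt
  · intro σ _
    have h1 := (hasDerivAt_pow l σ).mul ((hg σ).pow 2)
    refine h1.congr_deriv ?_
    norm_num
  · apply Continuous.intervalIntegrable
    fun_prop

lemma oneD {g g' : ℝ → ℝ} (hg : ∀ s, HasDerivAt g (g' s) s) (hg' : Continuous g')
    {l : ℕ} (hl : l = 1 ∨ l = 2)
    (h1 : IntegrableOn (fun s => s ^ (2 * l - 1) * g' s ^ 2) (Ioi 0))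
    (h2 : IntegrableOn (fun s => s * g s ^ 2) (Ioi 0))
    {r : ℝ} (hr : 0 < r) :
    r ^ l * g r ^ 2 ≤
      6 * ((∫ s in Ioi 0, s ^ (2 * l - 1) * g' s ^ 2) + ∫ s in Ioi 0, s * g s ^ 2) := by
  have hgc : Continuous g := by
    rw [continuous_iff_continuousAt]; exact fun s => (hg s).continuousAt
  set A₁ := ∫ s in Ioi 0, s ^ (2 * l - 1) * g' s ^ 2 with hA₁
  set A₂ := ∫ s in Ioi 0, s * g s ^ 2 with hA₂
  have hA₁0 : 0 ≤ A₁ := setIntegral_nonneg measurableSet_Ioi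
    (fun σ hσ => mul_nonneg (pow_nonneg (le_of_lt hσ) _) (sq_nonneg _))
  have hA₂0 : 0 ≤ A₂ := setIntegral_nonneg measurableSet_Ioi
    (fun σ hσ => mul_nonneg (le_of_lt hσ) (sq_nonneg _))
  have hsub : ∀ F : ℝ → ℝ, IntegrableOn F (Ioi 0) → (∀ σ ∈ Ioi 0, 0 ≤ F σ) →
      ∀ a b : ℝ, 0 ≤ a → a ≤ b → (∫ σ in a..b, F σ) ≤ ∫ σ in Ioi 0, F σ := by
    intro F hF hFn a b ha hab
    rw [intervalIntegral.integral_of_le hab]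
    apply setIntegral_mono_set hF
    · exact (ae_restrict_iff' measurableSet_Ioi).2 (ae_of_all _ hFn)
    · exact HasSubset.Subset.eventuallyLE (fun σ hσ => lt_of_le_of_lt ha hσ.1)
  rcases hl with rfl | rfl
  · -- l = 1
    have h1' : IntegrableOn (fun s : ℝ => s * g' s ^ 2) (Ioi 0) := by
      have : (fun s : ℝ => s ^ (2*1-1) * g' s ^ 2) = fun s : ℝ => s * g' s ^ 2 := by
        funext s; norm_num
      rwa [this] at h1
    have hA₁' : A₁ = ∫ s in Ioi 0, s * g' s ^ 2 := by
      rw [hA₁]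
      norm_num
    have hpow : ∀ s : ℝ, s ^ (1:ℕ) = s := fun s => pow_one s
    rw [pow_one]
    rcases le_or_gt r 1 with hr1 | hr1
    · -- small r
      obtain ⟨s₀, hs₀, hsm⟩ := exists_small hgc (a := 1) (b := 2) (by norm_num) (by norm_num)
      have hsm2 : g s₀ ^ 2 ≤ A₂ := by
        have h3 : (∫ σ in (1:ℝ)..2, σ * g σ ^ 2) ≤ A₂ :=
          hsub _ h2 (fun σ hσ => mul_nonneg (le_of_lt hσ) (sq_nonneg _)) 1 2 (by norm_num)
            (by norm_num)
        nlinarith [hsm, h3]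
      have hrs₀ : r ≤ s₀ := le_trans hr1 hs₀.1
      have hs₀pos : 0 < s₀ := lt_of_lt_of_le one_pos hs₀.1
      have hftc : g r = g s₀ - ∫ σ in r..s₀, g' σ := by
        have h4 := intervalIntegral.integral_eq_sub_of_hasDerivAt
          (f := g) (f' := g') (a := r) (b := s₀) (fun σ _ => hg σ)
          (hg'.intervalIntegrable _ _)
        linarith
      set I := ∫ σ in r..s₀, g' σ with hI
      have hI2 : I ^ 2 ≤ A₁ * Real.log (2 / r) := by
        have habs : |I| ≤ ∫ σ in r..s₀, |g' σ| :=
          intervalIntegral.abs_integral_le_integral_abs hrs₀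
        have habs0 : (0:ℝ) ≤ ∫ σ in r..s₀, |g' σ| :=
          intervalIntegral.integral_nonneg hrs₀ (fun σ _ => abs_nonneg _)
        have hCS := intervalCS hr hrs₀ hg'
        have hP : (∫ σ in r..s₀, σ * g' σ ^ 2) ≤ A₁ := by
          rw [hA₁']
          exact hsub _ h1' (fun σ hσ => mul_nonneg (le_of_lt hσ) (sq_nonneg _)) r s₀
            (le_of_lt hr) hrs₀
        have hQ : (∫ σ in r..s₀, σ⁻¹) = Real.log (s₀ / r) :=
          integral_inv_of_pos hr hs₀pos
        have hQle : Real.log (s₀ / r) ≤ Real.log (2 / r) := by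
          apply Real.log_le_log (by positivity)
          gcongr
          exact hs₀.2
        have hQ0 : 0 ≤ Real.log (s₀ / r) := by
          apply Real.log_nonneg
          rw [le_div_iff₀ hr]
          linarith
        have hP0 : 0 ≤ ∫ σ in r..s₀, σ * g' σ ^ 2 :=
          intervalIntegral.integral_nonneg hrs₀
            (fun σ hσ => mul_nonneg (le_trans (le_of_lt hr) hσ.1) (sq_nonneg _))
        calc I ^ 2 ≤ (∫ σ in r..s₀, |g' σ|) ^ 2 := by nlinarith [abs_nonneg I, sq_abs I]
          _ ≤ (∫ σ in r..s₀, σ * g' σ ^ 2) * (∫ σ in r..s₀, σ⁻¹) := hCS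
          _ ≤ A₁ * Real.log (2 / r) := by
              rw [hQ]
              apply mul_le_mul hP hQle hQ0 hA₁0
      have hrlog : r * Real.log (2 / r) ≤ 2 := by
        have hlog2 : Real.log 2 ≤ 1 := by
          have := Real.log_le_sub_one_of_pos (x := 2) (by norm_num)
          linarith
        have hinv : Real.log r⁻¹ ≤ r⁻¹ - 1 :=
          Real.log_le_sub_one_of_pos (by positivity)
        have : Real.log (2 / r) = Real.log 2 + Real.log r⁻¹ := by
          rw [div_eq_mul_inv, Real.log_mul (by norm_num) (by positivity)]
        rw [this]
        have h5 : r * Real.log r⁻¹ ≤ 1 - r := by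
          calc r * Real.log r⁻¹ ≤ r * (r⁻¹ - 1) := by
                apply mul_le_mul_of_nonneg_left hinv (le_of_lt hr)
            _ = 1 - r := by field_simp
        have h6 : r * Real.log 2 ≤ 1 := by nlinarith
        nlinarith
      have hgr : g r ^ 2 ≤ 2 * g s₀ ^ 2 + 2 * I ^ 2 := by
        rw [hftc]; nlinarith [sq_nonneg (g s₀ + I)]
      have hI20 : 0 ≤ I ^ 2 := sq_nonneg _
      calc r * g r ^ 2 ≤ r * (2 * g s₀ ^ 2 + 2 * I ^ 2) := by
            apply mul_le_mul_of_nonneg_left hgr (le_of_lt hr)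
        _ = 2 * (r * g s₀ ^ 2) + 2 * (r * I ^ 2) := by ring
        _ ≤ 2 * (1 * A₂) + 2 * (r * (A₁ * Real.log (2 / r))) := by
            have e1 : r * g s₀ ^ 2 ≤ 1 * A₂ := by nlinarith [sq_nonneg (g s₀)]
            have e2 : r * I ^ 2 ≤ r * (A₁ * Real.log (2 / r)) :=
              mul_le_mul_of_nonneg_left hI2 (le_of_lt hr)
            linarith
        _ = 2 * A₂ + 2 * A₁ * (r * Real.log (2 / r)) := by ring
        _ ≤ 2 * A₂ + 2 * A₁ * 2 := by nlinarith
        _ ≤ 6 * (A₁ + A₂) := by linarith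
    · -- large r
      have h2r : r < 2 * r := by linarith
      obtain ⟨s₀, hs₀, hsm⟩ := exists_small hgc (a := r) (b := 2 * r) (le_of_lt hr) h2r
      have hs₀pos : 0 < s₀ := lt_of_lt_of_le hr hs₀.1
      have hsm2 : s₀ * g s₀ ^ 2 ≤ 2 * A₂ := by
        have h3 : (∫ σ in r..2*r, σ * g σ ^ 2) ≤ A₂ :=
          hsub _ h2 (fun σ hσ => mul_nonneg (le_of_lt hσ) (sq_nonneg _)) r (2*r)
            (le_of_lt hr) (le_of_lt h2r)
        -- ((2r)² - r²)/2 = 3r²/2 ; g s₀² ≤ (2/(3r²)) A₂ ; s₀ ≤ 2r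
        have h4 : (3 / 2) * r ^ 2 * g s₀ ^ 2 ≤ A₂ := by nlinarith [hsm]
        have h5 : s₀ ≤ 2 * r := hs₀.2
        nlinarith [sq_nonneg (g s₀), hr1, hr, mul_le_mul_of_nonneg_left h5 (sq_nonneg (g s₀))]
      have hftc := ftc_weight 1 hg hg' hs₀.1
      norm_num at hftc
      -- s₀ * g s₀² - r * g r² = ∫_r^{s₀} (g² + σ(2gg'))
      have hmono : -(∫ σ in r..s₀, (g σ ^ 2 + σ * (2 * g σ * g' σ)))
          ≤ ∫ σ in r..s₀, (2 * (σ * g σ ^ 2) + σ * g' σ ^ 2) := by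
        rw [← intervalIntegral.integral_neg]
        apply intervalIntegral.integral_mono_on hs₀.1
        · apply Continuous.intervalIntegrable
          fun_prop
        · apply Continuous.intervalIntegrable
          fun_prop
        · intro σ hσ
          have hσ1 : 1 ≤ σ := le_trans (le_of_lt hr1) hσ.1
          have hσ0 : 0 < σ := lt_of_lt_of_le one_pos hσ1
          nlinarith [mul_nonneg (le_of_lt hσ0) (sq_nonneg (g σ + g' σ)), sq_nonneg (g σ),
            mul_le_mul_of_nonneg_right hσ1 (sq_nonneg (g σ))]
      have hint2 : (∫ σ in r..s₀, (2 * (σ * g σ ^ 2) + σ * g' σ ^ 2)) ≤ 2 * A₂ + A₁ := by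
        have e1 := hsub _ h2 (fun σ hσ => mul_nonneg (le_of_lt hσ) (sq_nonneg _)) r s₀
          (le_of_lt hr) hs₀.1
        have e2 := hsub _ h1' (fun σ hσ => mul_nonneg (le_of_lt hσ) (sq_nonneg _)) r s₀
          (le_of_lt hr) hs₀.1
        rw [intervalIntegral.integral_add ((by fun_prop : Continuous
            (fun σ : ℝ => 2 * (σ * g σ ^ 2))).intervalIntegrable _ _)
          ((by fun_prop : Continuous (fun σ : ℝ => σ * g' σ ^ 2)).intervalIntegrable _ _),
          intervalIntegral.integral_const_mul]
        rw [hA₁']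
        linarith
      have hfin : r * g r ^ 2 ≤ s₀ * g s₀ ^ 2 +
          (∫ σ in r..s₀, (2 * (σ * g σ ^ 2) + σ * g' σ ^ 2)) := by
        linarith [hmono, hftc]
      calc r * g r ^ 2 ≤ 2 * A₂ + (2 * A₂ + A₁) := by linarith
        _ ≤ 6 * (A₁ + A₂) := by linarith
  · -- l = 2
    have h1' : IntegrableOn (fun s : ℝ => s ^ 3 * g' s ^ 2) (Ioi 0) := by
      have : (fun s : ℝ => s ^ (2*2-1) * g' s ^ 2) = fun s : ℝ => s ^ 3 * g' s ^ 2 := by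
        funext s; norm_num
      rwa [this] at h1
    have hA₁' : A₁ = ∫ s in Ioi 0, s ^ 3 * g' s ^ 2 := by
      rw [hA₁]
    have hftc := ftc_weight 2 hg hg' (le_of_lt hr) (a := 0) (b := r)
    norm_num at hftc
    have hmono : (∫ σ in (0:ℝ)..r, ((2:ℝ) * σ * g σ ^ 2 + σ ^ 2 * (2 * g σ * g' σ)))
        ≤ ∫ σ in (0:ℝ)..r, (3 * (σ * g σ ^ 2) + σ ^ 3 * g' σ ^ 2) := by
      apply intervalIntegral.integral_mono_on (le_of_lt hr)
      · apply Continuous.intervalIntegrable; fun_prop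
      · apply Continuous.intervalIntegrable; fun_prop
      · intro σ hσ
        nlinarith [mul_nonneg hσ.1 (sq_nonneg (g σ - σ * g' σ))]
    have hint2 : (∫ σ in (0:ℝ)..r, (3 * (σ * g σ ^ 2) + σ ^ 3 * g' σ ^ 2)) ≤ 3 * A₂ + A₁ := by
      have e1 := hsub _ h2 (fun σ hσ => mul_nonneg (le_of_lt hσ) (sq_nonneg _)) 0 r le_rfl
        (le_of_lt hr)
      have e2 := hsub _ h1' (fun σ hσ => mul_nonneg (pow_nonneg (le_of_lt hσ) _) (sq_nonneg _))
        0 r le_rfl (le_of_lt hr)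
      rw [intervalIntegral.integral_add ((by fun_prop : Continuous
          (fun σ : ℝ => 3 * (σ * g σ ^ 2))).intervalIntegrable _ _)
        ((by fun_prop : Continuous (fun σ : ℝ => σ ^ 3 * g' σ ^ 2)).intervalIntegrable _ _),
        intervalIntegral.integral_const_mul]
      rw [hA₁']
      linarith
    calc r ^ 2 * g r ^ 2 ≤ 3 * A₂ + A₁ := by
          linarith [hmono, hint2, hftc]
      _ ≤ 6 * (A₁ + A₂) := by linarith


lemma ftc_sq {g g' : ℝ → ℝ} (hg : ∀ s, HasDerivAt g (g' s) s) (hg' : Continuous g')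
    {a b : ℝ} : g b ^ 2 - g a ^ 2 = ∫ σ in a..b, 2 * g σ * g' σ := by
  have hgc : Continuous g := by
    rw [continuous_iff_continuousAt]; exact fun s => (hg s).continuousAt
  symm
  apply intervalIntegral.integral_eq_sub_of_hasDerivAt
  · intro σ _
    have h1 := (hg σ).pow 2
    refine h1.congr_deriv ?_
    norm_num
  · apply Continuous.intervalIntegrable
    fun_prop

lemma circleSobolev {g g' : ℝ → ℝ} (hg : ∀ t, HasDerivAt g (g' t) t) (hg' : Continuous g')
    (hper : Function.Periodic g (2*π)) (hper' : Function.Periodic g' (2*π)) (t₀ : ℝ) :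
    g t₀ ^ 2 ≤ 2 * ∫ t in (-π)..π, (g t ^ 2 + g' t ^ 2) := by
  have hgc : Continuous g := by
    rw [continuous_iff_continuousAt]; exact fun s => (hg s).continuousAt
  have hFc : Continuous (fun t => g t ^ 2 + g' t ^ 2) := by fun_prop
  have hperF : Function.Periodic (fun t => g t ^ 2 + g' t ^ 2) (2*π) := by
    intro t; simp [hper t, hper' t]
  set D := ∫ t in (t₀ - 2*π)..t₀, (g t ^ 2 + g' t ^ 2) with hD
  have hπ : 0 < π := pi_pos
  have hDeq : D = ∫ t in (-π)..π, (g t ^ 2 + g' t ^ 2) := by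
    have h1 := hperF.intervalIntegral_add_eq (t₀ - 2*π) (-π)
    rw [hD]
    rw [show t₀ - 2*π + 2*π = t₀ by ring, show -π + 2*π = π by ring] at h1
    exact h1
  have hD0 : 0 ≤ D := by
    rw [hD]
    apply intervalIntegral.integral_nonneg (by linarith)
    intro t _; positivity
  have hpt : ∀ t ∈ Icc (t₀ - 2*π) t₀, g t₀ ^ 2 ≤ g t ^ 2 + D := by
    intro t ht
    have hftc : g t₀ ^ 2 - g t ^ 2 = ∫ σ in t..t₀, 2 * g σ * g' σ := ftc_sq hg hg'
    have h2 : (∫ σ in t..t₀, (2 * g σ * g' σ)) ≤ ∫ σ in t..t₀, (g σ ^ 2 + g' σ ^ 2) := by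
      apply intervalIntegral.integral_mono_on ht.2
      · apply Continuous.intervalIntegrable; fun_prop
      · apply Continuous.intervalIntegrable; fun_prop
      · intro σ _; nlinarith [sq_nonneg (g σ - g' σ)]
    have h3 : (∫ σ in t..t₀, (g σ ^ 2 + g' σ ^ 2)) ≤ D := by
      rw [hD]
      apply intervalIntegral.integral_mono_interval ht.1 ht.2 le_rfl
      · exact Filter.Eventually.of_forall (fun σ => by positivity)
      · apply Continuous.intervalIntegrable; fun_prop
    linarith
  have hint : 2*π * g t₀ ^ 2 ≤ (∫ t in (t₀ - 2*π)..t₀, g t ^ 2) + 2*π * D := by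
    have h1 : (∫ _ in (t₀ - 2*π)..t₀, g t₀ ^ 2) ≤ ∫ t in (t₀ - 2*π)..t₀, (g t ^ 2 + D) := by
      apply intervalIntegral.integral_mono_on (by linarith)
      · exact intervalIntegrable_const
      · apply Continuous.intervalIntegrable; fun_prop
      · exact hpt
    rw [intervalIntegral.integral_const] at h1
    rw [intervalIntegral.integral_add ((by fun_prop : Continuous (fun t => g t ^ 2)).intervalIntegrable _ _)
      intervalIntegrable_const, intervalIntegral.integral_const] at h1
    simp only [smul_eq_mul, show t₀ - (t₀ - 2*π) = 2*π by ring] at h1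
    linarith
  have hg2 : (∫ t in (t₀ - 2*π)..t₀, g t ^ 2) ≤ D := by
    rw [hD]
    apply intervalIntegral.integral_mono_on (by linarith)
    · apply Continuous.intervalIntegrable; fun_prop
    · apply Continuous.intervalIntegrable; fun_prop
    · intro σ _; nlinarith [sq_nonneg (g' σ)]
  rw [← hDeq]
  nlinarith [pi_gt_three]


noncomputable def eqE : EuclideanSpace ℝ (Fin 2) ≃ᵐ (ℝ × ℝ) :=
  (MeasurableEquiv.toLp 2 (Fin 2 → ℝ)).symm.trans MeasurableEquiv.finTwoArrow

lemma eqE_mp : MeasurePreserving eqE volume volume :=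
  (volume_preserving_finTwoArrow ℝ).comp
    (EuclideanSpace.volume_preserving_symm_measurableEquiv_toLp (Fin 2))

lemma eqE_symm_apply (p : ℝ × ℝ) : eqE.symm p = mk2 p.1 p.2 := by
  ext i
  fin_cases i <;>
    simp [eqE, mk2, MeasurableEquiv.finTwoArrow, EuclideanSpace.single_apply,
      MeasurableEquiv.piFinTwo, MeasurableEquiv.trans,
      MeasurableEquiv.symm, piFinTwoEquiv]

lemma polar_transfer (G : EuclideanSpace ℝ (Fin 2) → ℝ) (hG : Integrable G) :
    IntegrableOn (fun p : ℝ × ℝ => p.1 * G (mk2 (p.1 * Real.cos p.2) (p.1 * Real.sin p.2)))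
      (Ioi (0:ℝ) ×ˢ Ioo (-π) π) ∧
    (∫ p in Ioi (0:ℝ) ×ˢ Ioo (-π) π,
        p.1 * G (mk2 (p.1 * Real.cos p.2) (p.1 * Real.sin p.2))) = ∫ x, G x := by
  have hemb : MeasurableEmbedding (eqE.symm : ℝ × ℝ → EuclideanSpace ℝ (Fin 2)) :=
    eqE.symm.measurableEmbedding
  have hG' : Integrable (fun p : ℝ × ℝ => G (eqE.symm p)) :=
    (eqE_mp.symm eqE).integrable_comp_emb hemb |>.2 hG
  have htarget : polarCoord.target = Ioi (0:ℝ) ×ˢ Ioo (-π) π := rfl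
  set B : ℝ × ℝ → ℝ × ℝ →L[ℝ] ℝ × ℝ := fun p =>
    LinearMap.toContinuousLinearMap (Matrix.toLin (Module.Basis.finTwoProd ℝ) (Module.Basis.finTwoProd ℝ)
      !![Real.cos p.2, -p.1 * Real.sin p.2; Real.sin p.2, p.1 * Real.cos p.2]) with hB
  have B_det : ∀ p, (B p).det = p.1 := by
    intro p
    conv_rhs => rw [← one_mul p.1, ← Real.cos_sq_add_sin_sq p.2]
    simp only [hB, neg_mul, LinearMap.det_toContinuousLinearMap, LinearMap.det_toLin,
      Matrix.det_fin_two_of, sub_neg_eq_add]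
    ring
  have hderiv : ∀ p ∈ polarCoord.target, HasFDerivWithinAt polarCoord.symm (B p)
      polarCoord.target p := fun p _ => (hasFDerivAt_polarCoord_symm p).hasFDerivWithinAt
  have hinj : InjOn polarCoord.symm polarCoord.target := polarCoord.symm.injOn
  have himg : polarCoord.symm '' polarCoord.target = polarCoord.source :=
    polarCoord.symm_image_target_eq_source
  have hiff := integrableOn_image_iff_integrableOn_abs_det_fderiv_smul volume
    polarCoord.open_target.measurableSet hderiv hinj (fun q => G (eqE.symm q))
  rw [himg] at hiff
  have hsrc : IntegrableOn (fun q : ℝ × ℝ => G (eqE.symm q)) polarCoord.source :=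
    hG'.integrableOn
  have hint1 := hiff.1 hsrc
  have heq : ∀ p ∈ polarCoord.target,
      |(B p).det| • G (eqE.symm (polarCoord.symm p))
        = p.1 * G (mk2 (p.1 * Real.cos p.2) (p.1 * Real.sin p.2)) := by
    intro p hp
    rw [B_det, abs_of_pos hp.1, smul_eq_mul]
    congr 1
    rw [eqE_symm_apply]
    rfl
  constructor
  · rw [← htarget]
    exact (IntegrableOn.congr_fun hint1 heq polarCoord.open_target.measurableSet)
  · rw [← htarget]
    have h2 := integral_comp_polarCoord_symm (fun q : ℝ × ℝ => G (eqE.symm q))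
    have h3 : ∫ p : ℝ × ℝ, G (eqE.symm p) = ∫ x, G x :=
      (eqE_mp.symm eqE).integral_comp hemb G
    rw [h3] at h2
    rw [← h2]
    apply setIntegral_congr_fun polarCoord.open_target.measurableSet
    intro p hp
    simp only [smul_eq_mul, eqE_symm_apply, polarCoord_symm_apply]


lemma pow_helper {l : ℕ} (hl1 : 1 ≤ l) (s d : ℝ) :
    s * (s ^ (l-1) * d) ^ 2 = s ^ (2*l-1) * d ^ 2 := by
  rw [mul_pow, ← pow_mul]
  have h1 : (l-1)*2 = 2*l-2 := by omega
  have h2 : 2*l-1 = (2*l-2)+1 := by omega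
  rw [h1, h2, pow_succ]
  ring

/-- Lemma 3.3, first inequality: for `f ∈ H²(ℝ²)`, `λ ∈ {1,2}`,
`r^λ |f(x)|² ≤ C ∑_{a=0,1} (‖r^{λ-1} ∂_r Ω^a f‖²_{L²} + ‖Ω^a f‖²_{L²})`. -/
theorem weighted_decay_R2 :
    ∃ C : ℝ, 0 < C ∧
      ∀ (f : EuclideanSpace ℝ (Fin 2) → ℝ) (l : ℕ), (l = 1 ∨ l = 2) →
        ContDiff ℝ 2 f →
        Integrable (fun x : EuclideanSpace ℝ (Fin 2) => (‖x‖ ^ (l - 1) * rderiv2 f x) ^ 2) →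
        Integrable (fun x : EuclideanSpace ℝ (Fin 2) => (‖x‖ ^ (l - 1) * rderiv2 (rot2 f) x) ^ 2) →
        Integrable (fun x : EuclideanSpace ℝ (Fin 2) => (f x) ^ 2) →
        Integrable (fun x : EuclideanSpace ℝ (Fin 2) => (rot2 f x) ^ 2) →
        ∀ x : EuclideanSpace ℝ (Fin 2),
          ‖x‖ ^ l * (f x) ^ 2 ≤
            C * ((∫ y : EuclideanSpace ℝ (Fin 2), (‖y‖ ^ (l - 1) * rderiv2 f y) ^ 2) +
                 (∫ y : EuclideanSpace ℝ (Fin 2), (‖y‖ ^ (l - 1) * rderiv2 (rot2 f) y) ^ 2) +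
                 (∫ y : EuclideanSpace ℝ (Fin 2), (f y) ^ 2) +
                 ∫ y : EuclideanSpace ℝ (Fin 2), (rot2 f y) ^ 2) := by
  refine ⟨12, by norm_num, ?_⟩
  intro f l hl hf hi1 hi2 hi3 hi4 x
  have hl1 : 1 ≤ l := by rcases hl with rfl | rfl <;> norm_num
  set G₁ : EuclideanSpace ℝ (Fin 2) → ℝ := fun y => (‖y‖ ^ (l - 1) * rderiv2 f y) ^ 2 with hG₁
  set G₂ : EuclideanSpace ℝ (Fin 2) → ℝ :=
    fun y => (‖y‖ ^ (l - 1) * rderiv2 (rot2 f) y) ^ 2 with hG₂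
  set G₃ : EuclideanSpace ℝ (Fin 2) → ℝ := fun y => (f y) ^ 2 with hG₃
  set G₄ : EuclideanSpace ℝ (Fin 2) → ℝ := fun y => (rot2 f y) ^ 2 with hG₄
  set I₁ := ∫ y, G₁ y with hI₁
  set I₂ := ∫ y, G₂ y with hI₂
  set I₃ := ∫ y, G₃ y with hI₃
  set I₄ := ∫ y, G₄ y with hI₄
  have hI₁0 : 0 ≤ I₁ := integral_nonneg (fun y => sq_nonneg _)
  have hI₂0 : 0 ≤ I₂ := integral_nonneg (fun y => sq_nonneg _)
  have hI₃0 : 0 ≤ I₃ := integral_nonneg (fun y => sq_nonneg _)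
  have hI₄0 : 0 ≤ I₄ := integral_nonneg (fun y => sq_nonneg _)
  rcases eq_or_ne ‖x‖ 0 with hx0 | hx0
  · rw [hx0, zero_pow (by omega : l ≠ 0), zero_mul]
    linarith
  have hr : 0 < ‖x‖ := lt_of_le_of_ne (norm_nonneg x) (Ne.symm hx0)
  set r := ‖x‖ with hrdef
  have hdf : Differentiable ℝ f := hf.differentiable (by norm_num)
  have hrot : ContDiff ℝ 1 (rot2 f) := contDiff_rot2 hf
  have hdrot : Differentiable ℝ (rot2 f) := hrot.differentiable (by norm_num)
  -- find the angle t₀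
  have hnorm : r = Real.sqrt ((x 0)^2 + (x 1)^2) := by
    rw [hrdef, EuclideanSpace.norm_eq]
    simp [Fin.sum_univ_two, Real.norm_eq_abs, sq_abs]
  set z : ℂ := ⟨x 0, x 1⟩ with hzdef
  have habs : ‖z‖ = r := by
    rw [Complex.norm_def, hnorm]
    congr 1
    simp [Complex.normSq_mk, hzdef]
    ring
  have hz : z ≠ 0 := by
    intro h
    rw [h, norm_zero] at habs
    exact hx0 habs.symm
  set t₀ := Complex.arg z with ht₀
  have hcos : r * Real.cos t₀ = x 0 := by
    rw [ht₀, Complex.cos_arg hz, habs]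
    field_simp
    rfl
  have hsin : r * Real.sin t₀ = x 1 := by
    rw [ht₀, Complex.sin_arg, habs]
    field_simp
    rfl
  have hxeq : x = mk2 (r * Real.cos t₀) (r * Real.sin t₀) := by
    rw [hcos, hsin]
    exact (mk2_eq_self x).symm
  -- unit vectors
  have hθnorm : ∀ t : ℝ, ‖mk2 (Real.cos t) (Real.sin t)‖ = 1 := by
    intro t
    rw [norm_mk2, Real.cos_sq_add_sin_sq, Real.sqrt_one]
  -- polar transfers
  set H₁ : ℝ × ℝ → ℝ := fun p => p.1 * G₁ (mk2 (p.1 * Real.cos p.2) (p.1 * Real.sin p.2)) with hH₁def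
  set H₂ : ℝ × ℝ → ℝ := fun p => p.1 * G₂ (mk2 (p.1 * Real.cos p.2) (p.1 * Real.sin p.2)) with hH₂def
  set H₃ : ℝ × ℝ → ℝ := fun p => p.1 * G₃ (mk2 (p.1 * Real.cos p.2) (p.1 * Real.sin p.2)) with hH₃def
  set H₄ : ℝ × ℝ → ℝ := fun p => p.1 * G₄ (mk2 (p.1 * Real.cos p.2) (p.1 * Real.sin p.2)) with hH₄def
  obtain ⟨hP₁, hJ₁⟩ := polar_transfer G₁ hi1
  obtain ⟨hP₂, hJ₂⟩ := polar_transfer G₂ hi2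
  obtain ⟨hP₃, hJ₃⟩ := polar_transfer G₃ hi3
  obtain ⟨hP₄, hJ₄⟩ := polar_transfer G₄ hi4
  set μs := volume.restrict (Ioi (0:ℝ)) with hμs
  set νt := volume.restrict (Ioo (-π) π) with hνt
  have hkey : μs.prod νt = volume.restrict (Ioi (0:ℝ) ×ˢ Ioo (-π) π) := by
    rw [hμs, hνt, Measure.prod_restrict, ← MeasureTheory.Measure.volume_eq_prod]
  have hQ₁ : Integrable H₁ (μs.prod νt) := by rw [hkey]; exact hP₁
  have hQ₂ : Integrable H₂ (μs.prod νt) := by rw [hkey]; exact hP₂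
  have hQ₃ : Integrable H₃ (μs.prod νt) := by rw [hkey]; exact hP₃
  have hQ₄ : Integrable H₄ (μs.prod νt) := by rw [hkey]; exact hP₄
  set Y₁ : ℝ → ℝ := fun t => ∫ s, H₁ (s, t) ∂μs with hY₁def
  set Y₂ : ℝ → ℝ := fun t => ∫ s, H₂ (s, t) ∂μs with hY₂def
  set Y₃ : ℝ → ℝ := fun t => ∫ s, H₃ (s, t) ∂μs with hY₃def
  set Y₄ : ℝ → ℝ := fun t => ∫ s, H₄ (s, t) ∂μs with hY₄def
  have hY₁int : Integrable Y₁ νt := hQ₁.integral_prod_right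
  have hY₂int : Integrable Y₂ νt := hQ₂.integral_prod_right
  have hY₃int : Integrable Y₃ νt := hQ₃.integral_prod_right
  have hY₄int : Integrable Y₄ νt := hQ₄.integral_prod_right
  have hYval : ∀ (H : ℝ × ℝ → ℝ), Integrable H (μs.prod νt) →
      (∫ t, (∫ s, H (s, t) ∂μs) ∂νt) = ∫ p in Ioi (0:ℝ) ×ˢ Ioo (-π) π, H p := by
    intro H hH
    rw [← integral_prod_symm H hH, hkey]
  have hY₁val : (∫ t, Y₁ t ∂νt) = I₁ := by rw [hY₁def, hYval H₁ hQ₁, hJ₁, hI₁]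
  have hY₂val : (∫ t, Y₂ t ∂νt) = I₂ := by rw [hY₂def, hYval H₂ hQ₂, hJ₂, hI₂]
  have hY₃val : (∫ t, Y₃ t ∂νt) = I₃ := by rw [hY₃def, hYval H₃ hQ₃, hJ₃, hI₃]
  have hY₄val : (∫ t, Y₄ t ∂νt) = I₄ := by rw [hY₄def, hYval H₄ hQ₄, hJ₄, hI₄]
  -- circle step
  set g : ℝ → ℝ := fun t => f (mk2 (r * Real.cos t) (r * Real.sin t)) with hgdef
  set g' : ℝ → ℝ := fun t => -(rot2 f (mk2 (r * Real.cos t) (r * Real.sin t))) with hg'def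
  have hcurvec : Continuous (fun t : ℝ => mk2 (r * Real.cos t) (r * Real.sin t)) := by
    apply Continuous.add
    · exact (continuous_const.mul Real.continuous_cos).smul continuous_const
    · exact (continuous_const.mul Real.continuous_sin).smul continuous_const
  have hg : ∀ t, HasDerivAt g (g' t) t := fun t => hasDerivAt_angular hdf r t
  have hg'c : Continuous g' := (hrot.continuous.comp hcurvec).neg
  have hper : Function.Periodic g (2*π) := by
    intro t
    simp only [hgdef, Real.cos_add_two_pi, Real.sin_add_two_pi]
  have hper' : Function.Periodic g' (2*π) := by
    intro t
    simp only [hg'def, Real.cos_add_two_pi, Real.sin_add_two_pi]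
  have hcirc := circleSobolev hg hg'c hper hper' t₀
  -- pass to set integral over Ioo
  have hpilt : -π < π := by linarith [pi_pos]
  set W : ℝ → ℝ := fun t => g t ^ 2 + (rot2 f (mk2 (r * Real.cos t) (r * Real.sin t))) ^ 2
    with hWdef
  have hconv : (∫ t in (-π)..π, (g t ^ 2 + g' t ^ 2)) = ∫ t, W t ∂νt := by
    rw [intervalIntegral.integral_of_le hpilt.le, integral_Ioc_eq_integral_Ioo]
    congr 1
    funext t
    rw [hWdef, hg'def]
    simp [neg_sq]
  -- slicewise radial bound
  have hsl₁ := hQ₁.prod_left_ae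
  have hsl₂ := hQ₂.prod_left_ae
  have hsl₃ := hQ₃.prod_left_ae
  have hsl₄ := hQ₄.prod_left_ae
  have claim : ∀ᵐ t ∂νt, r ^ l * W t ≤ 6 * (Y₁ t + Y₂ t + Y₃ t + Y₄ t) := by
    filter_upwards [hsl₁, hsl₂, hsl₃, hsl₄] with t h₁ h₂ h₃ h₄
    set θ := mk2 (Real.cos t) (Real.sin t) with hθdef
    have hθ1 : ‖θ‖ = 1 := hθnorm t
    set u : ℝ → ℝ := fun s => f (s • θ) with hudef
    set u' : ℝ → ℝ := fun s => fderiv ℝ f (s • θ) θ with hu'def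
    set v : ℝ → ℝ := fun s => rot2 f (s • θ) with hvdef
    set v' : ℝ → ℝ := fun s => fderiv ℝ (rot2 f) (s • θ) θ with hv'def
    have hu : ∀ s, HasDerivAt u (u' s) s := fun s => hasDerivAt_ray hdf θ s
    have hv : ∀ s, HasDerivAt v (v' s) s := fun s => hasDerivAt_ray hdrot θ s
    have hu'c : Continuous u' := by
      have h5 : Continuous (fderiv ℝ f) := hf.continuous_fderiv (by norm_num)
      have h6 : Continuous (fun s : ℝ => s • θ) := continuous_id.smul continuous_const
      exact (h5.comp h6).clm_apply continuous_const
    have hv'c : Continuous v' := by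
      have h5 : Continuous (fderiv ℝ (rot2 f)) := hrot.continuous_fderiv (by norm_num)
      have h6 : Continuous (fun s : ℝ => s • θ) := continuous_id.smul continuous_const
      exact (h5.comp h6).clm_apply continuous_const
    have hsmulpt : ∀ s : ℝ, s • θ = mk2 (s * Real.cos t) (s * Real.sin t) := by
      intro s
      rw [hθdef, smul_mk2]
    -- slice equalities
    have hEq₁ : ∀ s ∈ Ioi (0:ℝ), H₁ (s, t) = s ^ (2*l-1) * u' s ^ 2 := by
      intro s hs
      have hnrm : ‖mk2 (s * Real.cos t) (s * Real.sin t)‖ = s := by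
        rw [← hsmulpt, norm_smul, hθ1, mul_one, Real.norm_eq_abs, abs_of_pos hs]
      have hrd : rderiv2 f (mk2 (s * Real.cos t) (s * Real.sin t)) = u' s := by
        rw [← hsmulpt, rderiv2_smul hθ1 hs, hu'def]
      simp only [hH₁def, hG₁, hnrm, hrd]
      exact pow_helper hl1 s (u' s)
    have hEq₂ : ∀ s ∈ Ioi (0:ℝ), H₂ (s, t) = s ^ (2*l-1) * v' s ^ 2 := by
      intro s hs
      have hnrm : ‖mk2 (s * Real.cos t) (s * Real.sin t)‖ = s := by
        rw [← hsmulpt, norm_smul, hθ1, mul_one, Real.norm_eq_abs, abs_of_pos hs]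
      have hrd : rderiv2 (rot2 f) (mk2 (s * Real.cos t) (s * Real.sin t)) = v' s := by
        rw [← hsmulpt, rderiv2_smul hθ1 hs, hv'def]
      simp only [hH₂def, hG₂, hnrm, hrd]
      exact pow_helper hl1 s (v' s)
    have hEq₃ : ∀ s ∈ Ioi (0:ℝ), H₃ (s, t) = s * u s ^ 2 := by
      intro s _
      simp only [hH₃def, hG₃, hudef, hsmulpt]
    have hEq₄ : ∀ s ∈ Ioi (0:ℝ), H₄ (s, t) = s * v s ^ 2 := by
      intro s _
      simp only [hH₄def, hG₄, hvdef, hsmulpt]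
    -- integrability of oneD data
    have hIn₁ : IntegrableOn (fun s => s ^ (2*l-1) * u' s ^ 2) (Ioi 0) :=
      IntegrableOn.congr_fun h₁ hEq₁ measurableSet_Ioi
    have hIn₂ : IntegrableOn (fun s => s ^ (2*l-1) * v' s ^ 2) (Ioi 0) :=
      IntegrableOn.congr_fun h₂ hEq₂ measurableSet_Ioi
    have hIn₃ : IntegrableOn (fun s => s * u s ^ 2) (Ioi 0) :=
      IntegrableOn.congr_fun h₃ hEq₃ measurableSet_Ioi
    have hIn₄ : IntegrableOn (fun s => s * v s ^ 2) (Ioi 0) :=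
      IntegrableOn.congr_fun h₄ hEq₄ measurableSet_Ioi
    have hbd₁ := oneD hu hu'c hl hIn₁ hIn₃ hr
    have hbd₂ := oneD hv hv'c hl hIn₂ hIn₄ hr
    -- integral identifications
    have hid₁ : (∫ s in Ioi (0:ℝ), s ^ (2*l-1) * u' s ^ 2) = Y₁ t :=
      (setIntegral_congr_fun measurableSet_Ioi (fun s hs => (hEq₁ s hs).symm))
    have hid₂ : (∫ s in Ioi (0:ℝ), s ^ (2*l-1) * v' s ^ 2) = Y₂ t :=
      (setIntegral_congr_fun measurableSet_Ioi (fun s hs => (hEq₂ s hs).symm))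
    have hid₃ : (∫ s in Ioi (0:ℝ), s * u s ^ 2) = Y₃ t :=
      (setIntegral_congr_fun measurableSet_Ioi (fun s hs => (hEq₃ s hs).symm))
    have hid₄ : (∫ s in Ioi (0:ℝ), s * v s ^ 2) = Y₄ t :=
      (setIntegral_congr_fun measurableSet_Ioi (fun s hs => (hEq₄ s hs).symm))
    rw [hid₁, hid₃] at hbd₁
    rw [hid₂, hid₄] at hbd₂
    have hur : u r = g t := by simp only [hudef, hgdef, hsmulpt]
    have hvr : v r = rot2 f (mk2 (r * Real.cos t) (r * Real.sin t)) := by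
      simp only [hvdef, hsmulpt]
    rw [hur] at hbd₁
    rw [hvr] at hbd₂
    rw [hWdef]
    have expand : r ^ l * (g t ^ 2 + rot2 f (mk2 (r * Real.cos t) (r * Real.sin t)) ^ 2)
        = r ^ l * g t ^ 2
          + r ^ l * rot2 f (mk2 (r * Real.cos t) (r * Real.sin t)) ^ 2 := by ring
    rw [expand]
    linarith
  -- integrate the claim
  have hWc : Continuous W := by
    rw [hWdef]
    apply Continuous.add
    · exact ((hdf.continuous).comp hcurvec).pow 2
    · exact ((hrot.continuous).comp hcurvec).pow 2
  have hXint : Integrable (fun t => r ^ l * W t) νt := by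
    rw [hνt]
    exact (((hWc.const_smul (r ^ l)).integrableOn_Icc (a := -π) (b := π)).mono_set
      Ioo_subset_Icc_self)
  have hYsum : Integrable (fun t => 6 * (Y₁ t + Y₂ t + Y₃ t + Y₄ t)) νt := by
    apply Integrable.const_mul
    exact ((hY₁int.add hY₂int).add hY₃int).add hY₄int
  have hmono := integral_mono_ae hXint hYsum claim
  have hXval : (∫ t, r ^ l * W t ∂νt) = r ^ l * ∫ t, W t ∂νt := integral_const_mul _ _
  have hYsumval : (∫ t, 6 * (Y₁ t + Y₂ t + Y₃ t + Y₄ t) ∂νt)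
      = 6 * (I₁ + I₂ + I₃ + I₄) := by
    rw [integral_const_mul]
    congr 1
    have e1 : Integrable (fun t => Y₁ t + Y₂ t) νt := hY₁int.add hY₂int
    have e2 : Integrable (fun t => Y₁ t + Y₂ t + Y₃ t) νt := e1.add hY₃int
    rw [integral_add e2 hY₄int, integral_add e1 hY₃int, integral_add hY₁int hY₂int,
      hY₁val, hY₂val, hY₃val, hY₄val]
  have hfinal : r ^ l * ∫ t, W t ∂νt ≤ 6 * (I₁ + I₂ + I₃ + I₄) := by
    rw [← hXval]
    rw [hYsumval] at hmono
    exact hmono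
  have hfx : f x = g t₀ := by simp only [hgdef]; rw [← hxeq]
  have hrl0 : (0:ℝ) ≤ r ^ l := pow_nonneg (le_of_lt hr) l
  calc ‖x‖ ^ l * f x ^ 2 = r ^ l * g t₀ ^ 2 := by rw [hfx]
    _ ≤ r ^ l * (2 * ∫ t in (-π)..π, (g t ^ 2 + g' t ^ 2)) := by
        apply mul_le_mul_of_nonneg_left hcirc hrl0
    _ = 2 * (r ^ l * ∫ t, W t ∂νt) := by rw [hconv]; ring
    _ ≤ 2 * (6 * (I₁ + I₂ + I₃ + I₄)) := by linarith
    _ ≤ 12 * (I₁ + I₂ + I₃ + I₄) := by linarith
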